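/- For k > 0, the rank-one intertwining operator V_k satisfies the intertwining relation T_k ∘ V_k = V_k ∘ d/dx on C^1(ℝ): for every continuously differentiable f and every x ≠ 0, T_k(V_k f)(x) = V_k(f')(x), where T_k f(x) = f'(x) + k(f(x)−f(−x))/x and V_k f(x) = (Γ(k+1/2)/(Γ(1/2)Γ(k))) ∫_{−1}^{1} f(xt)(1−t)^{k−1}(1+t)^{k} dt. -/

import Mathlib

open MeasureTheory intervalIntegral Set Metric

/-- The rank-one Dunkl operator. -/
noncomputable def dunklT (k : ℝ) (f : ℝ → ℝ) (x : ℝ) : ℝ :=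
  deriv f x + k * (f x - f (-x)) / x

/-- The rank-one Dunkl intertwining operator `V_k` for `k > 0`. -/
noncomputable def dunklV (k : ℝ) (f : ℝ → ℝ) (x : ℝ) : ℝ :=
  (Real.Gamma (k + 1/2) / (Real.Gamma (1/2) * Real.Gamma k)) *
    ∫ t in (-1:ℝ)..1, f (x * t) * (1 - t) ^ (k - 1) * (1 + t) ^ k

/-! ### Auxiliary lemmas -/

lemma rpow_factor {A : ℝ} (hA : 0 ≤ A) {k : ℝ} (hk : k ≠ 0) :
    A ^ k = A * A ^ (k - 1) := by
  rcases eq_or_lt_of_le hA with h | h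
  · rw [← h, Real.zero_rpow hk, zero_mul]
  · rw [← Real.rpow_one_add' h.le (by simpa using hk)]
    ring_nf

lemma oneSubInt {a : ℝ} (ha : -1 < a) :
    IntervalIntegrable (fun t : ℝ => (1 - t) ^ a) volume (-1) 1 := by
  have := (intervalIntegrable_rpow' (a := 0) (b := 2) ha).comp_sub_left 1
  simpa [show (1:ℝ) - 2 = -1 by norm_num] using this.symm

lemma onePlusInt {b : ℝ} (hb : -1 < b) :
    IntervalIntegrable (fun t : ℝ => (1 + t) ^ b) volume (-1) 1 := by
  have := (intervalIntegrable_rpow' (a := 0) (b := 2) hb).comp_sub_right (-1)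
  have h2 : (fun x : ℝ => (x - -1) ^ b) = fun t : ℝ => (1 + t) ^ b := by
    funext t; rw [sub_neg_eq_add, add_comm]
  rw [h2] at this
  norm_num at this
  exact this

lemma contOnPlus {b : ℝ} {s : Set ℝ} (hs : ∀ t ∈ s, (0:ℝ) < 1 + t) :
    ContinuousOn (fun t : ℝ => (1 + t) ^ b) s := fun t ht =>
  ((Real.continuousAt_rpow_const _ _ (Or.inl (hs t ht).ne')).comp
    (by fun_prop : ContinuousAt (fun t : ℝ => 1 + t) t)).continuousWithinAt

lemma contOnSub {a : ℝ} {s : Set ℝ} (hs : ∀ t ∈ s, (0:ℝ) < 1 - t) :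
    ContinuousOn (fun t : ℝ => (1 - t) ^ a) s := fun t ht =>
  ((Real.continuousAt_rpow_const _ _ (Or.inl (hs t ht).ne')).comp
    (by fun_prop : ContinuousAt (fun t : ℝ => 1 - t) t)).continuousWithinAt

/-- Integrability of the weight `(1-t)^a (1+t)^b` on `[-1,1]` for `a, b > -1`. -/
lemma wInt {a b : ℝ} (ha : -1 < a) (hb : -1 < b) :
    IntervalIntegrable (fun t => (1 - t) ^ a * (1 + t) ^ b) volume (-1) 1 := by
  have hL : IntervalIntegrable (fun t => (1 - t) ^ a * (1 + t) ^ b) volume (-1) 0 := by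
    have h1 : IntervalIntegrable (fun t : ℝ => (1 + t) ^ b) volume (-1) 0 :=
      (onePlusInt hb).mono_set (by
        rw [uIcc_of_le (by norm_num : (-1:ℝ) ≤ 0), uIcc_of_le (by norm_num : (-1:ℝ) ≤ 1)]
        exact Icc_subset_Icc le_rfl (by norm_num))
    exact h1.continuousOn_mul (contOnSub (fun t ht => by
      rw [uIcc_of_le (by norm_num)] at ht; linarith [ht.2]))
  have hR : IntervalIntegrable (fun t => (1 - t) ^ a * (1 + t) ^ b) volume 0 1 := by
    have h1 : IntervalIntegrable (fun t : ℝ => (1 - t) ^ a) volume 0 1 :=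
      (oneSubInt ha).mono_set (by
        rw [uIcc_of_le (by norm_num : (0:ℝ) ≤ 1), uIcc_of_le (by norm_num : (-1:ℝ) ≤ 1)]
        exact Icc_subset_Icc (by norm_num) le_rfl)
    exact h1.mul_continuousOn (contOnPlus (fun t ht => by
      rw [uIcc_of_le (by norm_num)] at ht; linarith [ht.1]))
  exact hL.trans hR

lemma wMeas (a b : ℝ) : Measurable (fun t : ℝ => (1 - t) ^ a * (1 + t) ^ b) := by
  have h1 : Measurable fun t : ℝ => (1 - t) ^ a := by
    have : Measurable fun t : ℝ => 1 - t := measurable_const.sub measurable_id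
    measurability
  have h2 : Measurable fun t : ℝ => (1 + t) ^ b := by
    have : Measurable fun t : ℝ => 1 + t := measurable_const.add measurable_id
    measurability
  exact h1.mul h2

lemma wNonneg {a b : ℝ} {t : ℝ} (ht : t ∈ Set.uIoc (-1:ℝ) 1) :
    0 ≤ (1 - t) ^ a * (1 + t) ^ b := by
  rw [Set.uIoc_of_le (by norm_num)] at ht
  exact mul_nonneg (Real.rpow_nonneg (by linarith [ht.2]) _)
    (Real.rpow_nonneg (by linarith [ht.1]) _)

/-- Differentiation under the integral sign for `x ↦ ∫ f(xt) w(t) dt`. -/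
lemma derivV {a b : ℝ} (ha : -1 < a) (hb : -1 < b) {f f' : ℝ → ℝ}
    (hf' : Continuous f') (hfd : ∀ y, HasDerivAt f (f' y) y) (x₀ : ℝ) :
    HasDerivAt (fun x => ∫ t in (-1:ℝ)..1, f (x * t) * ((1 - t) ^ a * (1 + t) ^ b))
      (∫ t in (-1:ℝ)..1, f' (x₀ * t) * t * ((1 - t) ^ a * (1 + t) ^ b)) x₀ := by
  have hfc : Continuous f := by
    rw [continuous_iff_continuousAt]; exact fun y => (hfd y).continuousAt
  set w : ℝ → ℝ := fun t => (1 - t) ^ a * (1 + t) ^ b with hw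
  set R : ℝ := |x₀| + 1 with hR
  obtain ⟨M, hM⟩ := (isCompact_Icc (a := -R) (b := R)).exists_bound_of_continuousOn
    hf'.continuousOn
  have key := intervalIntegral.hasDerivAt_integral_of_dominated_loc_of_deriv_le
    (F := fun x t => f (x * t) * w t) (F' := fun x t => f' (x * t) * t * w t)
    (μ := volume) (x₀ := x₀) (a := -1) (b := 1) (bound := fun t => M * w t) (s := ball x₀ 1) (ball_mem_nhds x₀ one_pos)
    ?_ ?_ ?_ ?_ ?_ ?_
  · exact key.2
  · filter_upwards with x
    exact ((hfc.comp (continuous_mul_left x)).measurable.mul (wMeas a b)).aestronglyMeasurable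
  · exact (wInt ha hb).continuousOn_mul (hfc.comp (continuous_mul_left x₀)).continuousOn
  · exact (((hf'.comp (continuous_mul_left x₀)).mul continuous_id).measurable.mul
      (wMeas a b)).aestronglyMeasurable
  · refine Filter.Eventually.of_forall fun t ht x hx => ?_
    have htIoc : t ∈ Set.Ioc (-1:ℝ) 1 := by rwa [Set.uIoc_of_le (by norm_num)] at ht
    have h1 : |x * t| ≤ R := by
      have hx1 : |x| ≤ |x₀| + 1 := by
        have := mem_ball_iff_norm.mp hx
        calc |x| = |x₀ + (x - x₀)| := by ring_nf
          _ ≤ |x₀| + |x - x₀| := abs_add_le _ _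
          _ ≤ |x₀| + 1 := by rw [Real.norm_eq_abs] at this; linarith
      calc |x * t| = |x| * |t| := abs_mul _ _
        _ ≤ (|x₀| + 1) * 1 := by
            apply mul_le_mul hx1 (abs_le.mpr ⟨by linarith [htIoc.1], htIoc.2⟩)
              (abs_nonneg _) (by positivity)
        _ = R := by rw [mul_one]
    have hMt : |f' (x * t)| ≤ M := hM _ (abs_le.mp h1 |> fun h => ⟨h.1, h.2⟩)
    have hM0 : 0 ≤ M := le_trans (abs_nonneg _) hMt
    have ht1 : |t| ≤ 1 := abs_le.mpr ⟨by linarith [htIoc.1], htIoc.2⟩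
    calc ‖f' (x * t) * t * w t‖ = |f' (x * t)| * |t| * |w t| := by
          rw [Real.norm_eq_abs, abs_mul, abs_mul]
      _ ≤ M * 1 * w t := by
          rw [abs_of_nonneg (wNonneg ht)]
          gcongr <;> first | exact wNonneg ht | exact hMt | exact ht1
      _ = M * w t := by ring
  · exact (wInt ha hb).const_mul M
  · refine Filter.Eventually.of_forall fun t _ x _ => ?_
    exact ((hfd (x * t)).comp x (hasDerivAt_mul_const (x := x) t)).mul_const (w t)

lemma contSubPow {k : ℝ} (hk : 0 < k) : Continuous fun t : ℝ => (1 - t) ^ k := by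
  rw [continuous_iff_continuousAt]
  exact fun t => (Real.continuousAt_rpow_const _ _ (Or.inr hk.le)).comp (by fun_prop)

lemma contAddPow {k : ℝ} (hk : 0 < k) : Continuous fun t : ℝ => (1 + t) ^ k := by
  rw [continuous_iff_continuousAt]
  exact fun t => (Real.continuousAt_rpow_const _ _ (Or.inr hk.le)).comp (by fun_prop)

/-- Integration by parts identity. -/
lemma ibp {k : ℝ} (hk : 0 < k) {f f' : ℝ → ℝ}
    (hf' : Continuous f') (hfd : ∀ y, HasDerivAt f (f' y) y) (x : ℝ) :
    x * ∫ t in (-1:ℝ)..1, f' (x * t) * ((1 - t) ^ k * (1 + t) ^ k)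
      = 2 * k * ∫ t in (-1:ℝ)..1, t * f (x * t) * ((1 - t) ^ (k-1) * (1 + t) ^ (k-1)) := by
  have hfc : Continuous f := by
    rw [continuous_iff_continuousAt]; exact fun y => (hfd y).continuousAt
  set g : ℝ → ℝ := fun t => f (x * t) * ((1 - t) ^ k * (1 + t) ^ k) with hg
  set g' : ℝ → ℝ := fun t =>
    x * (f' (x * t) * ((1 - t) ^ k * (1 + t) ^ k))
      - 2 * k * (t * f (x * t) * ((1 - t) ^ (k-1) * (1 + t) ^ (k-1))) with hg'
  have hderiv : ∀ t ∈ Ioo (-1:ℝ) 1, HasDerivAt g (g' t) t := by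
    intro t ht
    have h1t : (0:ℝ) < 1 - t := by linarith [ht.2]
    have h2t : (0:ℝ) < 1 + t := by linarith [ht.1]
    have hA : HasDerivAt (fun t : ℝ => f (x * t)) (f' (x * t) * x) t :=
      (hfd (x * t)).comp t (by simpa using (hasDerivAt_id t).const_mul x)
    have hB : HasDerivAt (fun t : ℝ => (1 - t) ^ k) (k * (1 - t) ^ (k-1) * (-1)) t :=
      (Real.hasDerivAt_rpow_const (Or.inl h1t.ne')).comp t
        (by simpa using (hasDerivAt_id t).const_sub 1)
    have hC : HasDerivAt (fun t : ℝ => (1 + t) ^ k) (k * (1 + t) ^ (k-1) * 1) t :=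
      (Real.hasDerivAt_rpow_const (Or.inl h2t.ne')).comp t
        (by simpa using (hasDerivAt_id t).const_add 1)
    have hD := hA.mul (hB.mul hC)
    have e1 : (1 - t) ^ k = (1 - t) * (1 - t) ^ (k - 1) := rpow_factor h1t.le hk.ne'
    have e2 : (1 + t) ^ k = (1 + t) * (1 + t) ^ (k - 1) := rpow_factor h2t.le hk.ne'
    have hEq : f' (x * t) * x * ((1 - t) ^ k * (1 + t) ^ k) +
        f (x * t) * (k * (1 - t) ^ (k - 1) * -1 * (1 + t) ^ k
          + (1 - t) ^ k * (k * (1 + t) ^ (k - 1) * 1)) = g' t := by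
      simp only [hg']
      rw [e1, e2]; ring
    exact hEq ▸ hD
  have hcont : ContinuousOn g (Icc (-1:ℝ) 1) :=
    ((hfc.comp (continuous_const.mul continuous_id)).mul
      ((contSubPow hk).mul (contAddPow hk))).continuousOn
  have hint : IntervalIntegrable g' volume (-1) 1 := by
    have i1 : IntervalIntegrable
        (fun t => x * (f' (x * t) * ((1 - t) ^ k * (1 + t) ^ k))) volume (-1) 1 :=
      (continuous_const.mul ((hf'.comp (continuous_const.mul continuous_id)).mul
        ((contSubPow hk).mul (contAddPow hk)))).intervalIntegrable _ _
    have i2 : IntervalIntegrable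
        (fun t => 2 * k * (t * f (x * t) * ((1 - t) ^ (k-1) * (1 + t) ^ (k-1))))
        volume (-1) 1 := by
      exact ((wInt (a := k - 1) (b := k - 1) (by linarith) (by linarith)).continuousOn_mul
        (g := fun t => t * f (x * t))
        ((continuous_id.mul (hfc.comp (continuous_const.mul continuous_id))).continuousOn)).const_mul
        (2 * k)
    exact i1.sub i2
  have hFTC := intervalIntegral.integral_eq_sub_of_hasDerivAt_of_le (by norm_num)
    hcont hderiv hint
  have hg1 : g 1 = 0 := by
    simp [hg, Real.zero_rpow hk.ne']
  have hgm1 : g (-1) = 0 := by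
    simp [hg, Real.zero_rpow hk.ne']
  rw [hg1, hgm1, sub_zero] at hFTC
  have i1 : IntervalIntegrable
      (fun t => x * (f' (x * t) * ((1 - t) ^ k * (1 + t) ^ k))) volume (-1) 1 :=
    (continuous_const.mul ((hf'.comp (continuous_const.mul continuous_id)).mul
      ((contSubPow hk).mul (contAddPow hk)))).intervalIntegrable _ _
  have i2 : IntervalIntegrable
      (fun t => 2 * k * (t * f (x * t) * ((1 - t) ^ (k-1) * (1 + t) ^ (k-1))))
      volume (-1) 1 := by
    exact ((wInt (a := k - 1) (b := k - 1) (by linarith) (by linarith)).continuousOn_mul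
      (g := fun t => t * f (x * t))
      ((continuous_id.mul (hfc.comp (continuous_const.mul continuous_id))).continuousOn)).const_mul
      (2 * k)
  rw [hg', intervalIntegral.integral_sub i1 i2, sub_eq_zero,
    intervalIntegral.integral_const_mul, intervalIntegral.integral_const_mul] at hFTC
  exact hFTC

lemma reflInt (f : ℝ → ℝ) (a b x : ℝ) :
    ∫ t in (-1:ℝ)..1, f (-x * t) * ((1 - t) ^ a * (1 + t) ^ b)
      = ∫ t in (-1:ℝ)..1, f (x * t) * ((1 + t) ^ a * (1 - t) ^ b) := by
  have h := intervalIntegral.integral_comp_neg (a := -1) (b := 1)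
    (fun s => f (x * s) * ((1 + s) ^ a * (1 - s) ^ b))
  rw [neg_neg] at h
  rw [← h]
  apply intervalIntegral.integral_congr
  intro t _
  simp only [mul_neg, neg_mul, neg_neg, sub_neg_eq_add, ← sub_eq_add_neg]

/-- The intertwining relation `T_k ∘ V_k = V_k ∘ d/dx` on `C¹(ℝ)`. -/
theorem intertwining_relation (k : ℝ) (hk : 0 < k) (f : ℝ → ℝ) (hf : ContDiff ℝ 1 f) :
    ∀ x : ℝ, x ≠ 0 → dunklT k (dunklV k f) x = dunklV k (deriv f) x := by
  intro x hx
  set c : ℝ := Real.Gamma (k + 1/2) / (Real.Gamma (1/2) * Real.Gamma k) with hc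
  have hf' : Continuous (deriv f) := hf.continuous_deriv le_rfl
  have hfc : Continuous f := hf.continuous
  have hfd : ∀ y, HasDerivAt f (deriv f y) y := fun y =>
    (hf.differentiable one_ne_zero y).hasDerivAt
  have hk1 : (-1:ℝ) < k - 1 := by linarith
  have hk0 : (-1:ℝ) < k := by linarith
  have hVf_eq : ∀ g : ℝ → ℝ, dunklV k g
      = fun y => c * ∫ t in (-1:ℝ)..1, g (y * t) * ((1 - t) ^ (k - 1) * (1 + t) ^ k) := by
    intro g; funext y; simp only [dunklV, hc, mul_assoc]
  -- the derivative part
  have hD : HasDerivAt (dunklV k f)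
      (c * ∫ t in (-1:ℝ)..1, deriv f (x * t) * t * ((1 - t) ^ (k - 1) * (1 + t) ^ k)) x := by
    rw [hVf_eq f]
    exact (derivV hk1 hk0 hf' hfd x).const_mul c
  -- the difference part
  have hI2 : dunklV k f x - dunklV k f (-x)
      = c * (2 * ∫ t in (-1:ℝ)..1, t * f (x * t) * ((1 - t) ^ (k-1) * (1 + t) ^ (k-1))) := by
    rw [hVf_eq f]
    simp only
    rw [reflInt f (k - 1) k x, ← mul_sub]
    congr 1
    have j1 : IntervalIntegrable
        (fun t => f (x * t) * ((1 - t) ^ (k - 1) * (1 + t) ^ k)) volume (-1) 1 :=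
      (wInt hk1 hk0).continuousOn_mul (hfc.comp (continuous_mul_left x)).continuousOn
    have j2 : IntervalIntegrable
        (fun t => f (x * t) * ((1 + t) ^ (k - 1) * (1 - t) ^ k)) volume (-1) 1 := by
      have base := (wInt (a := k) (b := k - 1) hk0 hk1).continuousOn_mul
        (g := fun t => f (x * t)) (hfc.comp (continuous_mul_left x)).continuousOn
      have heq : (fun t : ℝ => f (x * t) * ((1 + t) ^ (k - 1) * (1 - t) ^ k))
          = fun t : ℝ => f (x * t) * ((1 - t) ^ k * (1 + t) ^ (k - 1)) := by
        funext t; ring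
      rw [heq]; exact base
    rw [← intervalIntegral.integral_sub j1 j2]
    rw [show (2:ℝ) * ∫ t in (-1:ℝ)..1, t * f (x * t) * ((1 - t) ^ (k-1) * (1 + t) ^ (k-1))
      = ∫ t in (-1:ℝ)..1, 2 * (t * f (x * t) * ((1 - t) ^ (k-1) * (1 + t) ^ (k-1)))
      from (intervalIntegral.integral_const_mul _ _).symm]
    apply intervalIntegral.integral_congr
    intro t ht
    rw [uIcc_of_le (by norm_num : (-1:ℝ) ≤ 1)] at ht
    have e1 : (1 - t) ^ k = (1 - t) * (1 - t) ^ (k - 1) :=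
      rpow_factor (by linarith [ht.2]) hk.ne'
    have e2 : (1 + t) ^ k = (1 + t) * (1 + t) ^ (k - 1) :=
      rpow_factor (by linarith [ht.1]) hk.ne'
    simp only
    rw [e1, e2]
    generalize (1 - t) ^ (k - 1) = S
    generalize (1 + t) ^ (k - 1) = P
    ring
  -- integration by parts
  have hIBP := ibp hk hf' hfd x
  rw [dunklT, hD.deriv, hI2]
  have hdiv : k * (c * (2 * ∫ t in (-1:ℝ)..1,
        t * f (x * t) * ((1 - t) ^ (k-1) * (1 + t) ^ (k-1)))) / x
      = c * ∫ t in (-1:ℝ)..1, deriv f (x * t) * ((1 - t) ^ k * (1 + t) ^ k) := by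
    rw [div_eq_iff hx]
    linear_combination (-c) * hIBP
  rw [hdiv, hVf_eq (deriv f)]
  simp only
  rw [← mul_add]
  congr 1
  have i1 : IntervalIntegrable
      (fun t => deriv f (x * t) * t * ((1 - t) ^ (k - 1) * (1 + t) ^ k)) volume (-1) 1 :=
    (wInt hk1 hk0).continuousOn_mul (g := fun t => deriv f (x * t) * t)
      ((hf'.comp (continuous_mul_left x)).mul continuous_id).continuousOn
  have i3 : IntervalIntegrable
      (fun t => deriv f (x * t) * ((1 - t) ^ k * (1 + t) ^ k)) volume (-1) 1 :=
    ((hf'.comp (continuous_mul_left x)).mul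
      ((contSubPow hk).mul (contAddPow hk))).intervalIntegrable _ _
  rw [← intervalIntegral.integral_add i1 i3]
  apply intervalIntegral.integral_congr
  intro t ht
  rw [uIcc_of_le (by norm_num : (-1:ℝ) ≤ 1)] at ht
  have e1 : (1 - t) ^ k = (1 - t) * (1 - t) ^ (k - 1) :=
    rpow_factor (by linarith [ht.2]) hk.ne'
  simp only [Pi.add_apply]
  rw [e1]
  generalize (1 - t) ^ (k - 1) = S
  generalize (1 + t) ^ k = P
  ring
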